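/- Let S be a set, let D be a positive integer, let C : S → ℤ be a classifier and P : S → ℝ a function with 0 ≤ P(Y) ≤ 1 for all Y ∈ S, and let β : S → ℝ. Define α₁(Y) = (C(Y) + P(Y))/D, α₂(Y) = 1 − α₁(Y), F₁(Y) = α₁(Y) + β(Y), and F₂(Y) = α₂(Y) + β(Y). If Y₁, Y₂ ∈ S satisfy β(Y₁) = β(Y₂) and the Manhattan distance in objective space exceeds 4/D, i.e., |F₁(Y₁) − F₁(Y₂)| + |F₂(Y₁) − F₂(Y₂)| > 4/D, then C(Y₁) ≠ C(Y₂). -/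

import Mathlib

/-- If β(Y₁) = β(Y₂) and the Manhattan distance between the
objective vectors exceeds 4/D, then the class labels differ. -/
theorem manhattan_gap_implies_different_class
    {S : Type*}
    (D : ℕ) (hD : 0 < D)
    (C : S → ℤ) (P : S → ℝ) (hP : ∀ Y : S, 0 ≤ P Y ∧ P Y ≤ 1)
    (β : S → ℝ)
    (α₁ : S → ℝ) (hα₁ : ∀ Y, α₁ Y = ((C Y : ℝ) + P Y) / D)
    (α₂ : S → ℝ) (hα₂ : ∀ Y, α₂ Y = 1 - α₁ Y)
    (F₁ : S → ℝ) (hF₁ : ∀ Y, F₁ Y = α₁ Y + β Y)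
    (F₂ : S → ℝ) (hF₂ : ∀ Y, F₂ Y = α₂ Y + β Y)
    (Y₁ Y₂ : S) (hβeq : β Y₁ = β Y₂)
    (hdist : |F₁ Y₁ - F₁ Y₂| + |F₂ Y₁ - F₂ Y₂| > 4 / D) :
    C Y₁ ≠ C Y₂ := by
  intro hC
  have hDpos : (0:ℝ) < D := by exact_mod_cast hD
  have h1 : F₁ Y₁ - F₁ Y₂ = (P Y₁ - P Y₂) / D := by
    rw [hF₁, hF₁, hα₁, hα₁, hβeq, hC]; ring
  have h2 : F₂ Y₁ - F₂ Y₂ = -((P Y₁ - P Y₂) / D) := by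
    rw [hF₂, hF₂, hα₂, hα₂, hα₁, hα₁, hβeq, hC]; ring
  have hPa : |P Y₁ - P Y₂| ≤ 1 := by
    have := hP Y₁; have := hP Y₂
    rw [abs_le]; constructor <;> linarith
  have : |F₁ Y₁ - F₁ Y₂| + |F₂ Y₁ - F₂ Y₂| ≤ 2 / D := by
    rw [h1, h2, abs_neg, abs_div, abs_of_pos hDpos]
    rw [← add_div, div_le_div_iff₀ hDpos hDpos]
    nlinarith
  have h4 : (2:ℝ) / D ≤ 4 / D := by
    gcongr; norm_num
  linarith
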